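/- Fix n ≥ 1, injective ρ-functions ρ^{(k)} for 1 ≤ k ≤ n, and the derived functions f_i (i ≤ n) on increasing (i+1)-tuples from ω_n as defined from the ρ^{(k)}. Then for every infinite A ⊆ ω_n there is an infinite B ⊆ A such that for every i ≤ n the function f_i is shift-increasing on B: f_i(α_0, α_1, …, α_i) < f_i(α_1, …, α_i, β) whenever α_0 < α_1 < … < α_i < β all lie in B. -/

import Mathlib

/-- `ω_k` as an ordinal (`ω_0 = ω`). -/
noncomputable def omegaOrd (k : ℕ) : Ordinal := (Cardinal.aleph k).ord

/-- A system of injective ρ-functions: for each `1 ≤ k ≤ n`, `ρ k` is symmetric on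
distinct ordinals below `ω_k`, takes values below `ω_{k-1}`, and satisfies (a)
subadditivity, (b) injectivity in the first coordinate, and (c) `ρ(α,β) ≠ ρ(β,γ)`. -/
def IsRhoSystem (n : ℕ) (ρ : ℕ → Ordinal → Ordinal → Ordinal) : Prop :=
  ∀ k : ℕ, 1 ≤ k → k ≤ n →
    (∀ α β, α < omegaOrd k → β < omegaOrd k → α ≠ β → ρ k α β = ρ k β α) ∧
    (∀ α β, α < omegaOrd k → β < omegaOrd k → α ≠ β → ρ k α β < omegaOrd (k - 1)) ∧
    (∀ α β γ, α < β → β < γ → γ < omegaOrd k →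
      ρ k α β ≤ max (ρ k α γ) (ρ k β γ) ∧ ρ k α γ ≤ max (ρ k α β) (ρ k β γ)) ∧
    (∀ α α' β, α < β → α' < β → β < omegaOrd k → α ≠ α' → ρ k α β ≠ ρ k α' β) ∧
    (∀ α β γ, α < β → β < γ → γ < omegaOrd k → ρ k α β ≠ ρ k β γ)

/-- The functions `f_i` derived from the ρ-functions: `f_0(α) = α` and
`f_{i+1}(α_0,…,α_{i+1}) = ρ^{(n-i)}(f_i(α_0,…,α_i), f_i(α_1,…,α_{i+1}))`
(with value `0` if the two arguments coincide).  A tuple `(α_0,…,α_i)` is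
represented by a function `v : ℕ → Ordinal` via its first `i + 1` values. -/
noncomputable def fseq (n : ℕ) (ρ : ℕ → Ordinal → Ordinal → Ordinal) :
    ℕ → (ℕ → Ordinal) → Ordinal
  | 0, v => v 0
  | (i + 1), v =>
      if fseq n ρ i v = fseq n ρ i (fun j => v (j + 1)) then 0
      else ρ (n - i) (fseq n ρ i v) (fseq n ρ i (fun j => v (j + 1)))


/-- No strictly decreasing ℕ-sequence in a well-founded order. -/
lemma myNoDescending {α : Type*} [LinearOrder α] [WellFoundedLT α] (F : ℕ → α)
    (h : ∀ m, F (m + 1) < F m) : False := by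
  have wf : WellFounded ((· < ·) : α → α → Prop) := wellFounded_lt
  obtain ⟨m, hm⟩ := wf.min_mem (Set.range F) ⟨F 0, Set.mem_range_self 0⟩
  exact wf.not_lt_min (Set.range F) (Set.mem_range_self (m+1))
    (hm ▸ h m)

/-- An infinite set in a well-order contains a strictly increasing sequence. -/
lemma myExistsSeq {α : Type*} [LinearOrder α] [WellFoundedLT α] {S : Set α}
    (hS : S.Infinite) : ∃ g : ℕ → α, StrictMono g ∧ ∀ m, g m ∈ S := by
  have wf : WellFounded ((· < ·) : α → α → Prop) := wellFounded_lt
  let step : (Σ' T : Set α, T.Infinite) → (Σ' T : Set α, T.Infinite) := fun p =>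
    ⟨p.1 \ {wf.min p.1 p.2.nonempty}, p.2.diff (Set.finite_singleton _)⟩
  let seq : ℕ → Σ' T : Set α, T.Infinite := fun m => step^[m] ⟨S, hS⟩
  let g : ℕ → α := fun m => wf.min (seq m).1 (seq m).2.nonempty
  have hsub : ∀ m, (seq (m+1)).1 = (seq m).1 \ {g m} := by
    intro m
    show (step^[m+1] ⟨S, hS⟩).1 = _
    rw [Function.iterate_succ_apply']
  have hmem : ∀ m, g m ∈ (seq m).1 := fun m => wf.min_mem _ _
  have hlt : ∀ m, g m < g (m+1) := by
    intro m
    have h1 : g (m+1) ∈ (seq m).1 \ {g m} := by rw [← hsub]; exact hmem (m+1)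
    have := wf.not_lt_min (seq m).1 h1.1
    rcases lt_or_ge (g m) (g (m+1)) with h | h
    · exact h
    · exact absurd (lt_of_le_of_ne h (by simpa using h1.2)) this
  have hsubS : ∀ m, (seq m).1 ⊆ S := by
    intro m
    induction m with
    | zero => exact subset_rfl
    | succ k ih => rw [hsub k]; exact (Set.diff_subset).trans ih
  exact ⟨g, strictMono_nat_of_lt_succ hlt, fun m => hsubS m (hmem m)⟩


/-- Infinite Ramsey theorem for `k`-tuples from an infinite subset of `ℕ`. -/
theorem myRamsey (k : ℕ) : ∀ {C : Type} [Finite C] (c : (Fin k → ℕ) → C) (S : Set ℕ),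
    S.Infinite → ∃ B, B ⊆ S ∧ B.Infinite ∧ ∃ d : C,
      ∀ w : Fin k → ℕ, StrictMono w → (∀ l, w l ∈ B) → c w = d := by
  induction k with
  | zero =>
    intro C _ c S hS
    refine ⟨S, subset_rfl, hS, c (fun l => l.elim0), fun w _ _ => ?_⟩
    congr 1
    funext l
    exact l.elim0
  | succ k IH =>
    intro C _ c S hS
    have key : ∀ p : (Σ' T : Set ℕ, T.Infinite), ∃ q : (Σ' T : Set ℕ, T.Infinite) × C,
        q.1.1 ⊆ p.1 ∩ Set.Ioi (sInf p.1) ∧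
        ∀ t : Fin k → ℕ, StrictMono t → (∀ l, t l ∈ q.1.1) →
          c (Fin.cons (sInf p.1) t) = q.2 := by
      rintro ⟨T, hT⟩
      have hinf : (T ∩ Set.Ioi (sInf T)).Infinite := by
        have : T ∩ Set.Ioi (sInf T) = T \ Set.Iic (sInf T) := by
          ext x; simp [Set.mem_diff, not_le]
        rw [this]
        exact hT.diff (Set.finite_Iic _)
      obtain ⟨B', hB'sub, hB'inf, d', hd'⟩ :=
        IH (fun t => c (Fin.cons (sInf T) t)) (T ∩ Set.Ioi (sInf T)) hinf
      exact ⟨⟨⟨B', hB'inf⟩, d'⟩, hB'sub, hd'⟩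
    choose step hstep1 hstep2 using key
    let seq : ℕ → Σ' T : Set ℕ, T.Infinite := fun m => (fun p => (step p).1)^[m] ⟨S, hS⟩
    let a : ℕ → ℕ := fun m => sInf (seq m).1
    let d : ℕ → C := fun m => (step (seq m)).2
    have hseq : ∀ m, seq (m + 1) = (step (seq m)).1 := by
      intro m
      show (fun p => (step p).1)^[m+1] ⟨S, hS⟩ = _
      rw [Function.iterate_succ_apply']
    have hsub : ∀ m, (seq (m + 1)).1 ⊆ (seq m).1 ∩ Set.Ioi (a m) := by
      intro m; rw [hseq m]; exact hstep1 (seq m)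
    have hom : ∀ m (t : Fin k → ℕ), StrictMono t → (∀ l, t l ∈ (seq (m + 1)).1) →
        c (Fin.cons (a m) t) = d m := by
      intro m t ht htm
      have := hstep2 (seq m) t ht (by rw [← hseq m]; exact htm)
      exact this
    have hamem : ∀ m, a m ∈ (seq m).1 := fun m => Nat.sInf_mem (seq m).2.nonempty
    have halt : StrictMono a := by
      apply strictMono_nat_of_lt_succ
      intro m
      exact (hsub m (hamem (m + 1))).2
    have hnestj : ∀ m j, (seq (m + j)).1 ⊆ (seq m).1 := by
      intro m j
      induction j with
      | zero => exact subset_rfl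
      | succ j ih => exact ((hsub (m + j)).trans Set.inter_subset_left).trans ih
    have hnest : ∀ m m', m ≤ m' → (seq m').1 ⊆ (seq m).1 := by
      intro m m' h
      obtain ⟨j, rfl⟩ := Nat.exists_eq_add_of_le h
      exact hnestj m j
    have hmemlater : ∀ m m', m < m' → a m' ∈ (seq (m + 1)).1 := by
      intro m m' h
      exact hnest (m + 1) m' h (hamem m')
    obtain ⟨d0, hd0⟩ := Finite.exists_infinite_fiber d
    have hM : (d ⁻¹' {d0}).Infinite := Set.infinite_coe_iff.mp hd0
    refine ⟨a '' (d ⁻¹' {d0}), ?_, hM.image (halt.injective.injOn), d0, ?_⟩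
    · rintro x ⟨m, _, rfl⟩
      exact hnest 0 m (Nat.zero_le m) (hamem m)
    · intro w hw hwB
      have hch : ∀ l : Fin (k + 1), ∃ m, m ∈ d ⁻¹' {d0} ∧ a m = w l := by
        intro l
        obtain ⟨m, hm, hme⟩ := hwB l
        exact ⟨m, hm, hme⟩
      choose mf hmf1 hmf2 using hch
      have hmf : StrictMono mf := by
        intro l l' h
        have : a (mf l) < a (mf l') := by rw [hmf2, hmf2]; exact hw h
        exact halt.lt_iff_lt.mp this
      have h0 : w 0 = a (mf 0) := (hmf2 0).symm
      have htail : ∀ l : Fin k, Fin.tail w l ∈ (seq (mf 0 + 1)).1 := by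
        intro l
        have : mf 0 < mf l.succ := hmf (Fin.succ_pos l)
        have := hmemlater (mf 0) (mf l.succ) this
        rwa [hmf2] at this
      have htmono : StrictMono (Fin.tail w) := by
        intro l l' h
        exact hw (Fin.succ_lt_succ_iff.mpr h)
      have : c w = c (Fin.cons (a (mf 0)) (Fin.tail w)) := by
        rw [← h0, Fin.cons_self_tail]
      rw [this, hom (mf 0) (Fin.tail w) htmono htail]
      simpa using hmf1 0

lemma omegaOrd_pos (k : ℕ) : 0 < omegaOrd k := by
  have h0 : (0 : Cardinal) < Cardinal.aleph k :=
    lt_of_lt_of_le Cardinal.aleph0_pos (Cardinal.aleph0_le_aleph _)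
  calc (0 : Ordinal) = (0 : Cardinal).ord := Cardinal.ord_zero.symm
    _ < (Cardinal.aleph k).ord := Cardinal.ord_lt_ord.mpr h0

lemma fseq_congr (n : ℕ) (ρ : ℕ → Ordinal → Ordinal → Ordinal) :
    ∀ (i : ℕ) (v v' : ℕ → Ordinal), (∀ l, l ≤ i → v l = v' l) →
    fseq n ρ i v = fseq n ρ i v' := by
  intro i
  induction i with
  | zero => intro v v' h; simpa [fseq] using h 0 le_rfl
  | succ i ih =>
    intro v v' h
    have h1 : fseq n ρ i v = fseq n ρ i v' := ih v v' (fun l hl => h l (by omega))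
    have h2 : fseq n ρ i (fun j => v (j + 1)) = fseq n ρ i (fun j => v' (j + 1)) :=
      ih _ _ (fun l hl => h (l + 1) (by omega))
    simp only [fseq, h1, h2]

lemma fseq_lt (n : ℕ) (ρ : ℕ → Ordinal → Ordinal → Ordinal) (hρ : IsRhoSystem n ρ) :
    ∀ i, i ≤ n → ∀ v : ℕ → Ordinal, (∀ l, l ≤ i → v l < omegaOrd n) →
    fseq n ρ i v < omegaOrd (n - i) := by
  intro i
  induction i with
  | zero => intro _ v h; simpa [fseq] using h 0 le_rfl
  | succ i ih =>
    intro hin v hv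
    have hx : fseq n ρ i v < omegaOrd (n - i) := ih (by omega) v (fun l hl => hv l (by omega))
    have hy : fseq n ρ i (fun j => v (j + 1)) < omegaOrd (n - i) :=
      ih (by omega) _ (fun l hl => hv (l + 1) (by omega))
    by_cases he : fseq n ρ i v = fseq n ρ i (fun j => v (j + 1))
    · simp only [fseq, if_pos he]
      exact omegaOrd_pos _
    · simp only [fseq, if_neg he]
      have hb := (hρ (n - i) (by omega) (by omega)).2.1 _ _ hx hy he
      have hq : n - i - 1 = n - (i + 1) := by omega
      rwa [hq] at hb

lemma fseq_ne (n : ℕ) (ρ : ℕ → Ordinal → Ordinal → Ordinal) (hρ : IsRhoSystem n ρ)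
    (i : ℕ) (hin : i + 1 ≤ n)
    (B : Set Ordinal) (hB : B ⊆ Set.Iio (omegaOrd n))
    (good : ∀ v : ℕ → Ordinal, (∀ l, l ≤ i + 1 → v l ∈ B) → (∀ l, l < i + 1 → v l < v (l + 1)) →
      fseq n ρ i v < fseq n ρ i (fun l => v (l + 1)))
    (v : ℕ → Ordinal) (hv : ∀ l, l ≤ i + 2 → v l ∈ B) (hinc : ∀ l, l < i + 2 → v l < v (l + 1)) :
    fseq n ρ (i + 1) v ≠ fseq n ρ (i + 1) (fun l => v (l + 1)) := by
  have hxy : fseq n ρ i v < fseq n ρ i (fun l => v (l + 1)) :=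
    good v (fun l hl => hv l (by omega)) (fun l hl => hinc l (by omega))
  have hyz : fseq n ρ i (fun l => v (l + 1)) < fseq n ρ i (fun l => v (l + 1 + 1)) :=
    good (fun l => v (l + 1)) (fun l hl => hv (l + 1) (by omega))
      (fun l hl => hinc (l + 1) (by omega))
  have hz : fseq n ρ i (fun l => v (l + 1 + 1)) < omegaOrd (n - i) :=
    fseq_lt n ρ hρ i (by omega) _ (fun l hl => hB (hv (l + 1 + 1) (by omega)))
  have hc := (hρ (n - i) (by omega) (by omega)).2.2.2.2 _ _ _ hxy hyz hz
  simp only [fseq]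
  rw [if_neg hxy.ne, if_neg hyz.ne]
  exact hc

lemma chain_lt (v : ℕ → Ordinal) (k : ℕ) (h : ∀ l, l < k → v l < v (l + 1)) :
    ∀ a b, a < b → b ≤ k → v a < v b := by
  intro a b
  induction b with
  | zero => intro h1 _; omega
  | succ b ihb =>
    intro hab hbk
    rcases Nat.lt_or_ge a b with h' | h'
    · exact (ihb h' (by omega)).trans (h b (by omega))
    · have hab' : a = b := by omega
      subst hab'
      exact h a (by omega)


/-- For every infinite `A ⊆ ω_n` there is an infinite `B ⊆ A` on which every `f_i`
(`i ≤ n`) is shift-increasing: `f_i(α_0,…,α_i) < f_i(α_1,…,α_i,β)` whenever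
`α_0 < α_1 < … < α_i < β` all lie in `B`. -/


theorem stmt5 (n : ℕ) (hn : 1 ≤ n) (ρ : ℕ → Ordinal → Ordinal → Ordinal)
    (hρ : IsRhoSystem n ρ)
    (A : Set Ordinal) (hA : A ⊆ Set.Iio (omegaOrd n)) (hAinf : A.Infinite) :
    ∃ B ⊆ A, B.Infinite ∧
      ∀ i ≤ n, ∀ v : ℕ → Ordinal,
        (∀ j, j ≤ i + 1 → v j ∈ B) → (∀ j, j < i + 1 → v j < v (j + 1)) →
        fseq n ρ i v < fseq n ρ i (fun j => v (j + 1)) := by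
  classical
  obtain ⟨e, he, heA⟩ := myExistsSeq hAinf
  have main : ∀ i, i ≤ n → ∃ N : Set ℕ, N.Infinite ∧
      ∀ j, j ≤ i → ∀ v : ℕ → Ordinal, (∀ l, l ≤ j + 1 → v l ∈ e '' N) →
        (∀ l, l < j + 1 → v l < v (l + 1)) →
        fseq n ρ j v < fseq n ρ j (fun l => v (l + 1)) := by
    intro i
    induction i with
    | zero =>
      intro _
      refine ⟨Set.univ, Set.infinite_univ, ?_⟩
      intro j hj v _ hvinc
      have hj0 : j = 0 := Nat.le_zero.mp hj
      subst hj0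
      simpa [fseq] using hvinc 0 (by omega)
    | succ i IH =>
      intro hin
      obtain ⟨N, hNinf, hNgood⟩ := IH (by omega)
      set ext : (Fin (i + 3) → ℕ) → (ℕ → Ordinal) :=
        fun w l => if h : l < i + 3 then e (w ⟨l, h⟩) else 0 with hext
      set c : (Fin (i + 3) → ℕ) → Bool := fun w =>
        decide (fseq n ρ (i + 1) (ext w) < fseq n ρ (i + 1) (fun l => ext w (l + 1))) with hc
      obtain ⟨N', hN'sub, hN'inf, d, hd⟩ := myRamsey (i + 3) c N hNinf
      have hImgSub : e '' N' ⊆ e '' N := Set.image_mono hN'sub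
      have hBsub : e '' N' ⊆ Set.Iio (omegaOrd n) := by
        rintro x ⟨m, _, rfl⟩
        exact hA (heA m)
      have goodN' : ∀ v : ℕ → Ordinal, (∀ l, l ≤ i + 1 → v l ∈ e '' N') →
          (∀ l, l < i + 1 → v l < v (l + 1)) →
          fseq n ρ i v < fseq n ρ i (fun l => v (l + 1)) :=
        fun v hm hincv => hNgood i le_rfl v (fun l hl => hImgSub (hm l hl)) hincv
      have keylem : ∀ v : ℕ → Ordinal, (∀ l, l ≤ i + 2 → v l ∈ e '' N') →
          (∀ l, l < i + 2 → v l < v (l + 1)) →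
          decide (fseq n ρ (i + 1) v < fseq n ρ (i + 1) (fun l => v (l + 1))) = d := by
        intro v hm hincv
        have hch : ∀ l : Fin (i + 3), ∃ m, m ∈ N' ∧ e m = v (l : ℕ) := by
          intro l
          obtain ⟨m, hm1, hm2⟩ := hm (l : ℕ) (by have := l.isLt; omega)
          exact ⟨m, hm1, hm2⟩
        choose w hw1 hw2 using hch
        have vmono : StrictMono (fun l : Fin (i + 3) => v (l : ℕ)) := by
          intro l l' h
          exact chain_lt v (i + 2) hincv (l : ℕ) (l' : ℕ) h (by have := l'.isLt; omega)
        have hwmono : StrictMono w := by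
          intro l l' h
          have h2 : e (w l) < e (w l') := by
            rw [hw2 l, hw2 l']
            exact vmono h
          exact he.lt_iff_lt.mp h2
        have hcw := hd w hwmono hw1
        have hagree : ∀ l, l ≤ i + 2 → ext w l = v l := by
          intro l hl
          have hl3 : l < i + 3 := by omega
          show (if h : l < i + 3 then e (w ⟨l, h⟩) else 0) = v l
          rw [dif_pos hl3]
          exact hw2 ⟨l, hl3⟩
        have h1 : fseq n ρ (i + 1) (ext w) = fseq n ρ (i + 1) v :=
          fseq_congr n ρ (i + 1) _ _ (fun l hl => hagree l (by omega))
        have h2 : fseq n ρ (i + 1) (fun l => ext w (l + 1)) =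
            fseq n ρ (i + 1) (fun l => v (l + 1)) :=
          fseq_congr n ρ (i + 1) _ _ (fun l hl => hagree (l + 1) (by omega))
        rw [← h1, ← h2]
        exact hcw
      rcases Bool.eq_false_or_eq_true d with htrue | hfalse
      rotate_left
      · exfalso
        obtain ⟨g, hg, hgN⟩ := myExistsSeq hN'inf
        refine myNoDescending (fun m => fseq n ρ (i + 1) (fun l => e (g (m + l)))) ?_
        intro m
        show fseq n ρ (i + 1) (fun l => e (g (m + 1 + l))) <
          fseq n ρ (i + 1) (fun l => e (g (m + l)))
        have hm : ∀ l, l ≤ i + 2 → e (g (m + l)) ∈ e '' N' :=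
          fun l _ => ⟨g (m + l), hgN _, rfl⟩
        have hincv : ∀ l, l < i + 2 → e (g (m + l)) < e (g (m + (l + 1))) :=
          fun l _ => he (hg (by omega))
        have hkey := keylem (fun l => e (g (m + l))) hm hincv
        rw [hfalse] at hkey
        have hnlt := of_decide_eq_false hkey
        have hne := fseq_ne n ρ hρ i hin (e '' N') hBsub goodN'
          (fun l => e (g (m + l))) hm hincv
        have hlt := lt_of_le_of_ne (not_lt.mp hnlt) (Ne.symm hne)
        have hsh : fseq n ρ (i + 1) (fun l => e (g (m + (l + 1)))) =
            fseq n ρ (i + 1) (fun l => e (g (m + 1 + l))) :=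
          fseq_congr n ρ (i + 1) _ _ (fun l _ => by rw [show m + (l + 1) = m + 1 + l from by omega])
        rwa [hsh] at hlt
      · refine ⟨N', hN'inf, ?_⟩
        intro j hj v hm hincv
        rcases Nat.lt_or_ge j (i + 1) with hji | hji
        · exact hNgood j (by omega) v (fun l hl => hImgSub (hm l hl)) hincv
        · have hj' : j = i + 1 := by omega
          subst hj'
          have hkey := keylem v hm hincv
          rw [htrue] at hkey
          exact of_decide_eq_true hkey
  obtain ⟨N, hNinf, hNgood⟩ := main n le_rfl
  refine ⟨e '' N, ?_, hNinf.image (he.injective.injOn), ?_⟩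
  · rintro x ⟨m, _, rfl⟩
    exact heA m
  · exact hNgood
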